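/- For every finite set F ⊆ 𝕋^ω and every neighborhood U of zero in 𝕋^ω, there exists a topological group automorphism α of 𝕋^ω such that α(F) ⊆ U. -/

import Mathlib

open Filter Topology

section Shear

variable {M : Type*} [AddCommGroup M]

open Classical in
/-- Forward map: coordinate `i < n` becomes `x (a i) - x (b i)`; coordinate `a i`
stores the old coordinate `i`; everything else unchanged. -/
noncomputable def fwdMap (n : ℕ) (a b : ℕ → ℕ) (x : ℕ → M) (j : ℕ) : M :=
  if j < n then x (a j) - x (b j)
  else if h : ∃ i, i < n ∧ a i = j then x (Nat.find h)
  else x j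

open Classical in
/-- Backward map, inverse of `fwdMap`. -/
noncomputable def bwdMap (n : ℕ) (a b : ℕ → ℕ) (y : ℕ → M) (j : ℕ) : M :=
  if j < n then y (a j)
  else if h : ∃ i, i < n ∧ a i = j then y (Nat.find h) + y (b (Nat.find h))
  else y j

variable {n : ℕ} {a b : ℕ → ℕ}

open Classical in
lemma find_eq (hainj : Function.Injective a) {j : ℕ} (h : ∃ i, i < n ∧ a i = j)
    {i : ℕ} (hij : a i = j) : Nat.find h = i :=
  hainj (by rw [(Nat.find_spec h).2, hij])

lemma fwdMap_lt (x : ℕ → M) {j : ℕ} (hj : j < n) :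
    fwdMap n a b x j = x (a j) - x (b j) := by
  simp [fwdMap, hj]

open Classical in
lemma fwdMap_a (ha : ∀ i, n ≤ a i) (hainj : Function.Injective a)
    (x : ℕ → M) {i : ℕ} (hi : i < n) : fwdMap n a b x (a i) = x i := by
  have h1 : ¬ a i < n := not_lt.2 (ha i)
  have h2 : ∃ k, k < n ∧ a k = a i := ⟨i, hi, rfl⟩
  simp only [fwdMap, if_neg h1, dif_pos h2, find_eq hainj h2 rfl]

lemma fwdMap_other (x : ℕ → M) {j : ℕ} (h1 : ¬ j < n)
    (h2 : ¬ ∃ i, i < n ∧ a i = j) : fwdMap n a b x j = x j := by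
  simp only [fwdMap, if_neg h1, dif_neg h2]

lemma bwdMap_lt (y : ℕ → M) {j : ℕ} (hj : j < n) :
    bwdMap n a b y j = y (a j) := by
  simp [bwdMap, hj]

open Classical in
lemma bwdMap_a (ha : ∀ i, n ≤ a i) (hainj : Function.Injective a)
    (y : ℕ → M) {i : ℕ} (hi : i < n) : bwdMap n a b y (a i) = y i + y (b i) := by
  have h1 : ¬ a i < n := not_lt.2 (ha i)
  have h2 : ∃ k, k < n ∧ a k = a i := ⟨i, hi, rfl⟩
  simp only [bwdMap, if_neg h1, dif_pos h2, find_eq hainj h2 rfl]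

lemma bwdMap_other (y : ℕ → M) {j : ℕ} (h1 : ¬ j < n)
    (h2 : ¬ ∃ i, i < n ∧ a i = j) : bwdMap n a b y j = y j := by
  simp only [bwdMap, if_neg h1, dif_neg h2]

lemma not_mem_a_range (hab : ∀ i j, a i ≠ b j) (j : ℕ) :
    ¬ ∃ i, i < n ∧ a i = b j := by
  rintro ⟨i, -, h⟩; exact hab i j h

/-- The shear-and-swap automorphism. -/
noncomputable def shearAut (n : ℕ) (a b : ℕ → ℕ)
    (ha : ∀ i, n ≤ a i) (hb : ∀ i, n ≤ b i)
    (hainj : Function.Injective a) (hab : ∀ i j, a i ≠ b j) :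
    (ℕ → M) ≃+ (ℕ → M) where
  toFun := fwdMap n a b
  invFun := bwdMap n a b
  left_inv := by
    intro x
    funext j
    by_cases hj : j < n
    · rw [bwdMap_lt _ hj, fwdMap_a ha hainj _ hj]
    · by_cases h2 : ∃ i, i < n ∧ a i = j
      · classical
        obtain ⟨i, hi, hij⟩ := h2
        subst hij
        rw [bwdMap_a ha hainj _ hi, fwdMap_lt _ hi,
          fwdMap_other _ (not_lt.2 (hb i)) (not_mem_a_range hab i), sub_add_cancel]
      · rw [bwdMap_other _ hj h2, fwdMap_other _ hj h2]
  right_inv := by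
    intro y
    funext j
    by_cases hj : j < n
    · rw [fwdMap_lt _ hj, bwdMap_a ha hainj _ hj,
        bwdMap_other _ (not_lt.2 (hb j)) (not_mem_a_range hab j), add_sub_cancel_right]
    · by_cases h2 : ∃ i, i < n ∧ a i = j
      · obtain ⟨i, hi, hij⟩ := h2
        subst hij
        rw [fwdMap_a ha hainj _ hi, bwdMap_lt _ hi]
      · rw [fwdMap_other _ hj h2, bwdMap_other _ hj h2]
  map_add' := by
    intro x y
    funext j
    by_cases hj : j < n
    · simp only [fwdMap_lt _ hj, Pi.add_apply]
      abel
    · by_cases h2 : ∃ i, i < n ∧ a i = j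
      · obtain ⟨i, hi, hij⟩ := h2
        subst hij
        simp only [fwdMap_a ha hainj _ hi, Pi.add_apply]
      · simp only [fwdMap_other _ hj h2, Pi.add_apply]

lemma fwdMap_continuous [TopologicalSpace M] [IsTopologicalAddGroup M]
    (n : ℕ) (a b : ℕ → ℕ) : Continuous (fwdMap n a b : (ℕ → M) → (ℕ → M)) := by
  apply continuous_pi
  intro j
  simp only [fwdMap]
  split_ifs with h1 h2
  · exact (continuous_apply _).sub (continuous_apply _)
  · exact continuous_apply _
  · exact continuous_apply _

lemma bwdMap_continuous [TopologicalSpace M] [IsTopologicalAddGroup M]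
    (n : ℕ) (a b : ℕ → ℕ) : Continuous (bwdMap n a b : (ℕ → M) → (ℕ → M)) := by
  apply continuous_pi
  intro j
  simp only [bwdMap]
  split_ifs with h1 h2
  · exact continuous_apply _
  · exact (continuous_apply _).add (continuous_apply _)
  · exact continuous_apply _

end Shear

theorem stmt8 (F : Set (ℕ → AddCircle (1 : ℝ))) (hF : F.Finite)
    (U : Set (ℕ → AddCircle (1 : ℝ))) (hU : U ∈ nhds 0) :
    ∃ α : AddAut (ℕ → AddCircle (1 : ℝ)),
      Continuous ⇑α ∧ Continuous ⇑α.symm ∧ ⇑α '' F ⊆ U := by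
  haveI : Fact ((0:ℝ) < 1) := ⟨one_pos⟩
  haveI := hF.fintype
  rw [nhds_pi, Filter.mem_pi] at hU
  obtain ⟨I, hIfin, V, hV, hVU⟩ := hU
  obtain ⟨n, hn⟩ : ∃ n, ∀ i ∈ I, i < n :=
    ⟨(hIfin.toFinset.sup id) + 1, fun i hi =>
      Nat.lt_succ_of_le (Finset.le_sup (f := id) (hIfin.mem_toFinset.2 hi))⟩
  have hball : ∀ i, ∃ e > 0, Metric.ball (0 : AddCircle (1:ℝ)) e ⊆ V i := by
    intro i
    have := hV i
    rw [Metric.mem_nhds_iff] at this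
    obtain ⟨e, he, hsub⟩ := this
    exact ⟨e, he, hsub⟩
  choose e he hbsub using hball
  obtain ⟨δ, δpos, hδ⟩ : ∃ δ > 0, ∀ i ∈ I, δ ≤ e i := by
    rcases hIfin.toFinset.eq_empty_or_nonempty with h | h
    · refine ⟨1, one_pos, fun i hi => absurd (hIfin.mem_toFinset.2 hi) (by simp [h])⟩
    · refine ⟨hIfin.toFinset.inf' h e, ?_, fun i hi => Finset.inf'_le e (hIfin.mem_toFinset.2 hi)⟩
      exact (Finset.lt_inf'_iff h).2 fun i _ => he i
  -- the sequence of "coordinate vectors" of F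
  set g : ℕ → (F → AddCircle (1:ℝ)) := fun j f => (f : ℕ → AddCircle (1:ℝ)) j with hg
  obtain ⟨w, -, φ, hφ, hconv⟩ :=
    IsCompact.tendsto_subseq (isCompact_univ) (fun j => Set.mem_univ (g j))
  obtain ⟨N, hN⟩ := Metric.tendsto_atTop.mp hconv (δ/2) (by positivity)
  set K := max N n with hK
  set a : ℕ → ℕ := fun i => φ (K + 2*i) with haa
  set b : ℕ → ℕ := fun i => φ (K + 2*i + 1) with hbb
  have ha : ∀ i, n ≤ a i := fun i =>
    le_trans (le_trans (le_max_right N n) (Nat.le_add_right K (2*i))) hφ.le_apply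
  have hb : ∀ i, n ≤ b i := fun i =>
    le_trans (le_trans (le_max_right N n) (by omega)) hφ.le_apply
  have hainj : Function.Injective a := by
    intro i j h
    have := hφ.injective h
    omega
  have hab : ∀ i j, a i ≠ b j := by
    intro i j h
    have := hφ.injective h
    omega
  have hclose : ∀ (m : ℕ), N ≤ m → ∀ f : F, dist (g (φ m) f) (w f) < δ/2 := by
    intro m hm f
    calc dist (g (φ m) f) (w f) ≤ dist (g (φ m)) w := dist_le_pi_dist _ _ f
    _ < δ/2 := hN m hm
  refine ⟨shearAut n a b ha hb hainj hab, fwdMap_continuous n a b, bwdMap_continuous n a b, ?_⟩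
  rintro y ⟨x, hxF, rfl⟩
  apply hVU
  intro i hi
  have hin : i < n := hn i hi
  have : (shearAut n a b ha hb hainj hab : (ℕ → AddCircle (1:ℝ)) ≃+ _) x i
      = x (a i) - x (b i) := fwdMap_lt x hin
  rw [this]
  apply hbsub i
  rw [Metric.mem_ball, dist_zero_right, ← dist_eq_norm]
  set f : F := ⟨x, hxF⟩ with hf
  have h1 : dist (x (a i)) (w f) < δ/2 := hclose (K + 2*i) (le_trans (le_max_left N n) (by omega)) f
  have h2 : dist (x (b i)) (w f) < δ/2 := hclose (K + 2*i + 1) (le_trans (le_max_left N n) (by omega)) f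
  have : dist (x (a i)) (x (b i)) < δ := by
    calc dist (x (a i)) (x (b i)) ≤ dist (x (a i)) (w f) + dist (x (b i)) (w f) :=
      dist_triangle_right _ _ _
    _ < δ/2 + δ/2 := add_lt_add h1 h2
    _ = δ := by ring
  exact lt_of_lt_of_le this (hδ i hi)
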